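/- arXiv:1702.04200 — 2 statements merged into one kernel-verified Lean document; each statement's English description precedes it below -/
import Mathlib

section
/- Let p ∤ m be a positive integer and let y ∈ C_p. Then ∑_{i=0}^{m-1} LΓ_p((y+i)/m) = LΓ_p(y) - log_p(m)·ρ_p(y), where LΓ_p(x) = ∫_{Z_p} (x+t)(log_p(x+t)-1)χ(x+t) dt and ρ_p(y) = ∫_{Z_p} (y+t)χ(y+t) dt. -/
open Filter Finset

lemma aux_sum_range_mul {M : Type*} [AddCommMonoid M] (g : ℕ → M) (a b : ℕ) :
    ∑ k ∈ Finset.range (a * b), g k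
      = ∑ i ∈ Finset.range a, ∑ j ∈ Finset.range b, g (b * i + j) := by
  induction a with
  | zero => simp
  | succ a ih =>
      rw [Nat.succ_mul, Finset.sum_range_add, ih, Finset.sum_range_succ]
      congr 1
      exact Finset.sum_congr rfl fun j _ => by rw [Nat.mul_comm]

lemma aux_norm_hasSum_le {K : Type*} [NontriviallyNormedField K] [IsUltrametricDist K]
    {F : ℕ → K} {s : K} {B : ℝ} (h : HasSum F s) (hB : 0 ≤ B) (hF : ∀ k, ‖F k‖ ≤ B) :
    ‖s‖ ≤ B := by
  have h' := (continuous_norm.tendsto s).comp h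
  refine le_of_tendsto' h' fun t => ?_
  exact IsUltrametricDist.norm_sum_le_of_forall_le_of_nonneg hB fun i _ => hF i

set_option maxHeartbeats 1000000 in
/-- For `p ∤ m` and `y ∈ ℂ_p`,
`∑_{i=0}^{m-1} LΓ_p((y+i)/m) = LΓ_p(y) - log_p(m) ρ_p(y)`, where
`LΓ_p(x) = ∫_{ℤ_p} (x+t)(log_p(x+t)-1) χ(x+t) dt` and `ρ_p(y) = ∫_{ℤ_p} (y+t) χ(y+t) dt`. -/
theorem kashio_log_gamma_prime_to_m_distribution (p : ℕ) [Fact p.Prime] (K : Type*)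
    [NontriviallyNormedField K] [CompleteSpace K] [IsAlgClosed K] [IsUltrametricDist K]
    [Algebra ℚ_[p] K] (hiso : ∀ q : ℚ_[p], ‖algebraMap ℚ_[p] K q‖ = ‖q‖)
    (logp : K → K)
    (hlog_an : ∀ x : K, x ≠ 0 → AnalyticAt K logp x)
    (hlog_mul : ∀ x y : K, x ≠ 0 → y ≠ 0 → logp (x * y) = logp x + logp y)
    (hlog_p : logp (p : K) = 0)
    (hlog_series : ∀ x : K, ‖x - 1‖ < 1 →
      HasSum (fun n : ℕ => (-1) ^ n * (x - 1) ^ (n + 1) / (n + 1 : K)) (logp x))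
    (LG : K → K)
    (hLG : ∀ x : K,
      Tendsto (fun n : ℕ => ((p : K) ^ n)⁻¹ * ∑ j ∈ Finset.range (p ^ n),
          (if 1 ≤ ‖x + (j : K)‖ then (x + (j : K)) * (logp (x + (j : K)) - 1) else 0))
        atTop (nhds (LG x)))
    (R : K → K)
    (hR : ∀ x : K,
      Tendsto (fun n : ℕ => ((p : K) ^ n)⁻¹ * ∑ j ∈ Finset.range (p ^ n),
          (if 1 ≤ ‖x + (j : K)‖ then x + (j : K) else 0))
        atTop (nhds (R x)))
    (m : ℕ) (hm0 : 0 < m) (hm : ¬ p ∣ m) (y : K) :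
    ∑ i ∈ Finset.range m, LG ((y + (i : K)) / (m : K)) = LG y - logp (m : K) * R y := by
  classical
  -- ========== basic norm facts ==========
  have hp : p.Prime := Fact.out
  have hp1 : 1 < p := hp.one_lt
  have hpR : (1:ℝ) < p := by exact_mod_cast hp1
  have hpR0 : (0:ℝ) < p := by positivity
  have hnormK : ∀ n : ℕ, ‖(n : K)‖ = ‖(n : ℚ_[p])‖ := fun n => by
    rw [← map_natCast (algebraMap ℚ_[p] K) n, hiso]
  have hqn : ‖(p : K)‖ = (p:ℝ)⁻¹ := by rw [hnormK, Padic.norm_p]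
  have hnat_le : ∀ n : ℕ, ‖(n : K)‖ ≤ 1 := fun n => by
    rw [hnormK]
    exact_mod_cast Padic.norm_int_le_one (n : ℤ)
  have hqpow' : ∀ n : ℕ, ‖(p:K) ^ n‖ = ((p:ℝ) ^ n)⁻¹ := fun n => by
    rw [norm_pow, hqn, inv_pow]
  have hqpow : ∀ n : ℕ, ‖((p:K) ^ n)⁻¹‖ = (p:ℝ) ^ n := fun n => by
    rw [norm_inv, hqpow', inv_inv]
  have hmK : ‖(m : K)‖ = 1 := by
    rw [hnormK]
    have h1 : ‖((m:ℤ) : ℚ_[p])‖ ≤ 1 := Padic.norm_int_le_one _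
    have h2 : ¬ ‖((m:ℤ) : ℚ_[p])‖ < 1 := by
      rw [Padic.norm_intCast_lt_one_iff]
      exact_mod_cast hm
    push_cast at h1 h2
    linarith
  have hm0K : (m : K) ≠ 0 := by
    intro h
    rw [h, norm_zero] at hmK
    norm_num at hmK
  have hinv_nat : ∀ n : ℕ, 0 < n → ‖((n : K))⁻¹‖ ≤ (n:ℝ) := by
    intro n hn
    have hnz : (n : ℚ_[p]) ≠ 0 := Nat.cast_ne_zero.mpr hn.ne'
    rw [norm_inv, hnormK, Padic.norm_eq_zpow_neg_valuation hnz, Padic.valuation_natCast]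
    rw [← zpow_neg, neg_neg, zpow_natCast]
    calc ((p:ℝ)) ^ (padicValNat p n) = ((p ^ padicValNat p n : ℕ) : ℝ) := by push_cast; ring
      _ ≤ (n:ℝ) := by exact_mod_cast Nat.le_of_dvd hn pow_padicValNat_dvd
  -- ========== basic log facts ==========
  have hlog_one : logp 1 = 0 := by
    have h := hlog_mul 1 1 one_ne_zero one_ne_zero
    rw [mul_one] at h
    exact (left_eq_add.mp h)
  have hlog_div : ∀ u : K, u ≠ 0 → logp (u / (m:K)) = logp u - logp (m:K) := by
    intro u hu
    have h1 : logp ((u / m) * m) = logp (u / m) + logp (m:K) :=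
      hlog_mul _ _ (div_ne_zero hu hm0K) hm0K
    rw [div_mul_cancel₀ u hm0K] at h1
    linear_combination -h1
  have hterm : ∀ (u : K) (k : ℕ), ‖u‖ * p ≤ 1 →
      ‖(-1:K) ^ k * u ^ (k + 1) / ((k:K) + 1)‖ ≤ ‖u‖ * (‖u‖ * p) ^ k := by
    intro u k hu
    have h1 : ‖(-1:K) ^ k * u ^ (k + 1) / ((k:K) + 1)‖
        = ‖u‖ ^ (k+1) * ‖(((k+1 : ℕ) : K))⁻¹‖ := by
      rw [div_eq_mul_inv, norm_mul, norm_mul, norm_pow, norm_pow, norm_neg, norm_one,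
        one_pow, one_mul]
      push_cast
      ring_nf
    rw [h1]
    have h2 : ‖(((k+1 : ℕ) : K))⁻¹‖ ≤ ((k+1 : ℕ) : ℝ) := hinv_nat _ (Nat.succ_pos k)
    have h3 : ((k+1:ℕ) : ℝ) ≤ (p:ℝ) ^ k := by
      exact_mod_cast Nat.le_of_lt_succ (Nat.succ_lt_succ (Nat.lt_pow_self (n := k) hp1))
    have hu0 : (0:ℝ) ≤ ‖u‖ := norm_nonneg u
    calc ‖u‖ ^ (k+1) * ‖(((k+1 : ℕ) : K))⁻¹‖ ≤ ‖u‖ ^ (k+1) * (p:ℝ) ^ k :=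
          mul_le_mul_of_nonneg_left (h2.trans h3) (by positivity)
      _ = ‖u‖ * (‖u‖ * p) ^ k := by ring
  have hlog_small : ∀ u : K, ‖u‖ * p ≤ 1 → ‖logp (1 + u)‖ ≤ ‖u‖ := by
    intro u hu
    have hu1 : ‖u‖ < 1 := by nlinarith [norm_nonneg u]
    have hs := hlog_series (1 + u) (by simpa using hu1)
    simp only [add_sub_cancel_left] at hs
    refine aux_norm_hasSum_le hs (norm_nonneg u) fun k => ?_
    refine (hterm u k hu).trans ?_
    have : (‖u‖ * p) ^ k ≤ 1 := pow_le_one₀ (by positivity) hu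
    nlinarith [norm_nonneg u]
  have hlog_small2 : ∀ u : K, ‖u‖ * p ≤ 1 → ‖logp (1 + u) - u‖ ≤ (p:ℝ) * ‖u‖ ^ 2 := by
    intro u hu
    have hu1 : ‖u‖ < 1 := by nlinarith [norm_nonneg u]
    have hs := hlog_series (1 + u) (by simpa using hu1)
    simp only [add_sub_cancel_left] at hs
    have hs1 := (hasSum_nat_add_iff' 1).mpr hs
    simp only [Finset.range_one, Finset.sum_singleton, pow_zero, one_mul, pow_one,
      Nat.cast_zero, zero_add, div_one] at hs1
    refine aux_norm_hasSum_le hs1 (by positivity) fun k => ?_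
    have h := hterm u (k+1) hu
    push_cast at h ⊢
    refine h.trans ?_
    have : (‖u‖ * p) ^ k ≤ 1 := pow_le_one₀ (by positivity) hu
    have hup : 0 ≤ ‖u‖ * p := by positivity
    calc ‖u‖ * (‖u‖ * ↑p) ^ (k + 1) = ((p:ℝ) * ‖u‖ ^ 2) * (‖u‖ * p) ^ k := by ring
      _ ≤ ((p:ℝ) * ‖u‖ ^ 2) * 1 := mul_le_mul_of_nonneg_left this (by positivity)
      _ = (p:ℝ) * ‖u‖ ^ 2 := by ring
  -- ========== difference estimates ==========
  have hsmall_lt_one : ∀ ε : K, ‖ε‖ * p ≤ 1 → ‖ε‖ < 1 := by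
    intro ε hε
    nlinarith [norm_nonneg ε]
  have hchi : ∀ z ε : K, ‖ε‖ < 1 → (1 ≤ ‖z + ε‖ ↔ 1 ≤ ‖z‖) := by
    intro z ε hε
    constructor
    · intro h
      by_contra h'
      push_neg at h'
      have := (IsUltrametricDist.norm_add_le_max z ε).trans_lt (max_lt h' hε)
      linarith
    · intro h
      by_contra h'
      push_neg at h'
      have h3 := IsUltrametricDist.norm_add_le_max (z + ε) (-ε)
      rw [norm_neg] at h3
      have h4 : (z + ε) + (-ε) = z := by ring
      rw [h4] at h3
      have := h3.trans_lt (max_lt h' hε)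
      linarith
  have hdivnorm : ∀ z ε : K, 1 ≤ ‖z‖ → ‖ε / z‖ ≤ ‖ε‖ := by
    intro z ε hz
    rw [norm_div]
    exact div_le_self (norm_nonneg ε) hz
  have hone_add_ne : ∀ u : K, ‖u‖ < 1 → (1 : K) + u ≠ 0 := by
    intro u hu h
    have h2 : u = -1 := by linear_combination h
    rw [h2, norm_neg, norm_one] at hu
    linarith
  have hkey : ∀ z ε : K, 1 ≤ ‖z‖ → ‖ε‖ < 1 →
      logp (z + ε) = logp z + logp (1 + ε / z) := by
    intro z ε hz hε
    have hz0 : z ≠ 0 := by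
      intro h; rw [h, norm_zero] at hz; linarith
    have hu1 : ‖ε / z‖ < 1 := (hdivnorm z ε hz).trans_lt hε
    have hu0 : (1 : K) + ε / z ≠ 0 := hone_add_ne _ hu1
    have hze : z + ε = z * (1 + ε / z) := by field_simp
    rw [hze, hlog_mul z _ hz0 hu0]
  have hlogd : ∀ z ε : K, 1 ≤ ‖z‖ → ‖ε‖ * p ≤ 1 → ‖logp (z + ε) - logp z‖ ≤ ‖ε‖ := by
    intro z ε hz hε
    have hε1 : ‖ε‖ < 1 := hsmall_lt_one ε hε
    rw [hkey z ε hz hε1]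
    have hdu : ‖ε / z‖ * p ≤ 1 := by
      have := hdivnorm z ε hz
      nlinarith
    have := hlog_small (ε / z) hdu
    calc ‖logp z + logp (1 + ε / z) - logp z‖ = ‖logp (1 + ε / z)‖ := by ring_nf
      _ ≤ ‖ε / z‖ := this
      _ ≤ ‖ε‖ := hdivnorm z ε hz
  have hfd : ∀ z ε : K, ‖ε‖ * p ≤ 1 →
      ‖(if 1 ≤ ‖z + ε‖ then (z + ε) * (logp (z + ε) - 1) else 0)
        - (if 1 ≤ ‖z‖ then z * (logp z - 1) else 0)
        - ε * (if 1 ≤ ‖z‖ then logp (z + ε) else 0)‖ ≤ (p:ℝ) * ‖ε‖ ^ 2 := by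
    intro z ε hε
    have hε1 : ‖ε‖ < 1 := hsmall_lt_one ε hε
    by_cases hz : 1 ≤ ‖z‖
    · rw [if_pos ((hchi z ε hε1).mpr hz), if_pos hz, if_pos hz]
      have hz0 : z ≠ 0 := by
        intro h; rw [h, norm_zero] at hz; linarith
      have hk := hkey z ε hz hε1
      have hX : (z + ε) * (logp (z + ε) - 1) - z * (logp z - 1) - ε * logp (z + ε)
          = z * (logp (1 + ε / z) - ε / z) := by
        rw [hk]
        field_simp
        ring
      rw [hX, norm_mul]
      have hdu : ‖ε / z‖ * p ≤ 1 := by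
        have := hdivnorm z ε hz
        nlinarith
      have h2 := hlog_small2 (ε / z) hdu
      have hz0' : (0:ℝ) < ‖z‖ := by linarith
      calc ‖z‖ * ‖logp (1 + ε / z) - ε / z‖ ≤ ‖z‖ * ((p:ℝ) * ‖ε / z‖ ^ 2) :=
            mul_le_mul_of_nonneg_left h2 (norm_nonneg z)
        _ = (p:ℝ) * ‖ε‖ ^ 2 / ‖z‖ := by
            rw [norm_div]
            field_simp
        _ ≤ (p:ℝ) * ‖ε‖ ^ 2 := div_le_self (by positivity) hz
    · rw [if_neg (fun h => hz ((hchi z ε hε1).mp h)), if_neg hz, if_neg hz]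
      simp only [sub_zero, mul_zero, sub_self, norm_zero]
      positivity
  have hrd : ∀ z ε : K, ‖ε‖ * p ≤ 1 →
      ‖(if 1 ≤ ‖z + ε‖ then z + ε else 0)
        - (if 1 ≤ ‖z‖ then z else 0)
        - ε * (if 1 ≤ ‖z‖ then 1 else 0)‖ ≤ (p:ℝ) * ‖ε‖ ^ 2 := by
    intro z ε hε
    have hε1 : ‖ε‖ < 1 := hsmall_lt_one ε hε
    by_cases hz : 1 ≤ ‖z‖
    · rw [if_pos ((hchi z ε hε1).mpr hz), if_pos hz, if_pos hz]
      simp only [mul_one]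
      have : z + ε - z - ε = 0 := by ring
      rw [this, norm_zero]
      positivity
    · rw [if_neg (fun h => hz ((hchi z ε hε1).mp h)), if_neg hz, if_neg hz]
      simp only [sub_zero, mul_zero, sub_self, norm_zero]
      positivity
  -- ========== shifts are small ==========
  have hshift : ∀ (n a : ℕ), ‖(p:K) ^ n * (a:K)‖ ≤ ((p:ℝ) ^ n)⁻¹ := by
    intro n a
    rw [norm_mul, hqpow']
    calc ((p:ℝ)^n)⁻¹ * ‖(a:K)‖ ≤ ((p:ℝ)^n)⁻¹ * 1 :=
          mul_le_mul_of_nonneg_left (hnat_le a) (by positivity)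
      _ = ((p:ℝ)^n)⁻¹ := mul_one _
  have hpow_ge : ∀ n : ℕ, 1 ≤ n → (p:ℝ) ≤ (p:ℝ) ^ n := fun n hn =>
    le_self_pow₀ (by linarith) (by omega)
  have hshift_p : ∀ (n a : ℕ), 1 ≤ n → ‖(p:K) ^ n * (a:K)‖ * p ≤ 1 := by
    intro n a hn
    have h1 := hshift n a
    have h2 := hpow_ge n hn
    have h3 : (0:ℝ) < (p:ℝ)^n := by positivity
    have h4 : ((p:ℝ)^n)⁻¹ * p ≤ 1 := by
      rw [inv_mul_le_iff₀ h3]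
      simpa using h2
    nlinarith [norm_nonneg ((p:K)^n * (a:K))]
  have hshift_lt1 : ∀ (n a : ℕ), 1 ≤ n → ‖(p:K) ^ n * (a:K)‖ < 1 := by
    intro n a hn
    have := hshift_p n a hn
    nlinarith [norm_nonneg ((p:K)^n * (a:K))]
  -- ========== W lemma: Volkenborn-type sums are O(p^[-n]) ==========
  have hW : ∀ φ : K → K,
      (∀ z ε : K, 1 ≤ ‖z‖ → ‖ε‖ * p ≤ 1 → ‖φ (z + ε) - φ z‖ ≤ ‖ε‖) →
      ∃ C : ℝ, 0 ≤ C ∧ ∀ n : ℕ, 1 ≤ n →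
        ‖∑ j ∈ Finset.range (p ^ n), (if 1 ≤ ‖y + (j:K)‖ then φ (y + (j:K)) else 0)‖
          ≤ C * ((p:ℝ) ^ n)⁻¹ := by
    intro φ hφ
    set W : ℕ → K := fun n =>
      ∑ j ∈ Finset.range (p ^ n), (if 1 ≤ ‖y + (j:K)‖ then φ (y + (j:K)) else 0) with hWdef
    set C : ℝ := max ((p:ℝ) * ‖W 1‖) (p:ℝ) with hCdef
    have hC0 : 0 ≤ C := le_trans (by linarith) (le_max_right _ _)
    have hCp : (p:ℝ) ≤ C := le_max_right _ _
    have main : ∀ n : ℕ, 1 ≤ n → ‖W n‖ ≤ C * ((p:ℝ) ^ n)⁻¹ := ?_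
    · exact ⟨C, hC0, fun n hn => main n hn⟩
    have hkey2 : ∀ n : ℕ, 1 ≤ n → ‖W (n+1) - (p:K) * W n‖ ≤ ((p:ℝ) ^ n)⁻¹ := by
      intro n hn
      have hsplit : p ^ (n+1) = p * p ^ n := by ring
      have hW1 : W (n+1) = ∑ a ∈ Finset.range p, ∑ j ∈ Finset.range (p ^ n),
          (if 1 ≤ ‖y + ((p ^ n * a + j : ℕ):K)‖ then φ (y + ((p ^ n * a + j : ℕ):K)) else 0) := by
        rw [hWdef]
        simp only
        rw [hsplit, aux_sum_range_mul]
      have hW2 : (p:K) * W n = ∑ a ∈ Finset.range p, W n := by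
        rw [Finset.sum_const, Finset.card_range, nsmul_eq_mul]
      rw [hW1, hW2, ← Finset.sum_sub_distrib]
      apply IsUltrametricDist.norm_sum_le_of_forall_le_of_nonneg (by positivity)
      intro a _
      rw [hWdef]
      simp only
      rw [← Finset.sum_sub_distrib]
      apply IsUltrametricDist.norm_sum_le_of_forall_le_of_nonneg (by positivity)
      intro j _
      have hcast : ((p ^ n * a + j : ℕ) : K) = (j:K) + (p:K) ^ n * (a:K) := by
        push_cast; ring
      rw [hcast, ← add_assoc]
      set z := y + (j:K)
      set ε := (p:K) ^ n * (a:K)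
      have hε1 : ‖ε‖ < 1 := hshift_lt1 n a hn
      by_cases hz : 1 ≤ ‖z‖
      · rw [if_pos ((hchi z ε hε1).mpr hz), if_pos hz]
        exact (hφ z ε hz (hshift_p n a hn)).trans (hshift n a)
      · rw [if_neg (fun h => hz ((hchi z ε hε1).mp h)), if_neg hz]
        simp only [sub_self, norm_zero]
        positivity
    intro n hn
    induction n, hn using Nat.le_induction with
    | base =>
        rw [pow_one, hCdef]
        calc ‖W 1‖ = ((p:ℝ) * ‖W 1‖) * (p:ℝ)⁻¹ := by field_simp
          _ ≤ max ((p:ℝ) * ‖W 1‖) (p:ℝ) * (p:ℝ)⁻¹ :=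
              mul_le_mul_of_nonneg_right (le_max_left _ _) (by positivity)
    | succ n hn ih =>
        have h1 : W (n+1) = (W (n+1) - (p:K) * W n) + (p:K) * W n := by ring
        rw [h1]
        refine (IsUltrametricDist.norm_add_le_max _ _).trans (max_le ?_ ?_)
        · refine (hkey2 n hn).trans ?_
          rw [pow_succ, mul_inv]
          have h3 : (0:ℝ) < ((p:ℝ)^n)⁻¹ := by positivity
          have h4 : (0:ℝ) < (p:ℝ)⁻¹ := by positivity
          have h5 : (p:ℝ) * (p:ℝ)⁻¹ = 1 := mul_inv_cancel₀ (by linarith)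
          nlinarith [mul_le_mul_of_nonneg_right hCp (le_of_lt (mul_pos h3 h4))]
        · rw [norm_mul, hqn]
          calc (p:ℝ)⁻¹ * ‖W n‖ ≤ (p:ℝ)⁻¹ * (C * ((p:ℝ)^n)⁻¹) :=
                mul_le_mul_of_nonneg_left ih (by positivity)
            _ = C * ((p:ℝ)^(n+1))⁻¹ := by
                rw [pow_succ, mul_inv]
                ring
  -- ========== T lemma: shifted-difference averages tend to 0 ==========
  have hT : ∀ (h φ : K → K),
      (∀ z ε : K, 1 ≤ ‖z‖ → ‖ε‖ * p ≤ 1 → ‖φ (z + ε) - φ z‖ ≤ ‖ε‖) →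
      (∀ z ε : K, ‖ε‖ * p ≤ 1 →
        ‖h (z + ε) - h z - ε * (if 1 ≤ ‖z‖ then φ (z + ε) else 0)‖ ≤ (p:ℝ) * ‖ε‖ ^ 2) →
      ∀ c : ℕ,
      Tendsto (fun n : ℕ => ((p:K) ^ n)⁻¹ *
          ∑ j ∈ Finset.range (p ^ n), (h (y + ((p ^ n * c + j : ℕ):K)) - h (y + (j:K))))
        atTop (nhds 0) := by
    intro h φ hφd hhd c
    obtain ⟨C, hC0, hCb⟩ := hW φ hφd
    set E : ℝ := max (p:ℝ) (max C 1) with hEdef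
    have hE0 : 0 ≤ E := le_trans (by linarith) (le_max_left _ _)
    have hEp : (p:ℝ) ≤ E := le_max_left _ _
    have hEC1 : max C 1 ≤ E := le_max_right _ _
    apply squeeze_zero_norm' (a := fun n => E * ((p:ℝ) ^ n)⁻¹)
    · filter_upwards [eventually_ge_atTop 1] with n hn
      set ε := (p:K) ^ n * (c:K) with hεdef
      have hεp : ‖ε‖ * p ≤ 1 := hshift_p n c hn
      have hεn : ‖ε‖ ≤ ((p:ℝ) ^ n)⁻¹ := hshift n c
      set t : ℝ := ((p:ℝ) ^ n)⁻¹ with htdef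
      have ht0 : 0 < t := by rw [htdef]; positivity
      have htp : (p:ℝ) ^ n * t = 1 := by
        rw [htdef]; field_simp
      have hcast : ∀ j : ℕ, y + ((p ^ n * c + j : ℕ) : K) = (y + (j:K)) + ε := by
        intro j
        rw [hεdef]; push_cast; ring
      have hsum : ∑ j ∈ Finset.range (p ^ n), (h (y + ((p ^ n * c + j : ℕ):K)) - h (y + (j:K)))
          = (∑ j ∈ Finset.range (p ^ n), (h ((y + (j:K)) + ε) - h (y + (j:K))
              - ε * (if 1 ≤ ‖y + (j:K)‖ then φ ((y + (j:K)) + ε) else 0)))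
            + ε * ∑ j ∈ Finset.range (p ^ n),
                (if 1 ≤ ‖y + (j:K)‖ then φ ((y + (j:K)) + ε) else 0) := by
        rw [Finset.mul_sum, ← Finset.sum_add_distrib]
        refine Finset.sum_congr rfl fun j _ => ?_
        rw [hcast j]
        ring
      rw [hsum, norm_mul, hqpow n]
      have bound1 : ‖∑ j ∈ Finset.range (p ^ n), (h ((y + (j:K)) + ε) - h (y + (j:K))
          - ε * (if 1 ≤ ‖y + (j:K)‖ then φ ((y + (j:K)) + ε) else 0))‖ ≤ E * t * t := by
        apply IsUltrametricDist.norm_sum_le_of_forall_le_of_nonneg (by positivity)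
        intro j _
        refine (hhd (y + (j:K)) ε hεp).trans ?_
        have h1 : ‖ε‖ ^ 2 ≤ t ^ 2 := pow_le_pow_left₀ (norm_nonneg ε) hεn 2
        nlinarith [norm_nonneg ε]
      have bound2 : ‖∑ j ∈ Finset.range (p ^ n),
          (if 1 ≤ ‖y + (j:K)‖ then φ ((y + (j:K)) + ε) else 0)‖ ≤ max C 1 * t := by
        have hsplit2 : ∑ j ∈ Finset.range (p ^ n),
            (if 1 ≤ ‖y + (j:K)‖ then φ ((y + (j:K)) + ε) else 0)
            = (∑ j ∈ Finset.range (p ^ n), (if 1 ≤ ‖y + (j:K)‖ then φ (y + (j:K)) else 0))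
              + ∑ j ∈ Finset.range (p ^ n),
                ((if 1 ≤ ‖y + (j:K)‖ then φ ((y + (j:K)) + ε) else 0)
                  - (if 1 ≤ ‖y + (j:K)‖ then φ (y + (j:K)) else 0)) := by
          rw [← Finset.sum_add_distrib]
          exact Finset.sum_congr rfl fun j _ => by ring
        rw [hsplit2]
        refine (IsUltrametricDist.norm_add_le_max _ _).trans (max_le ?_ ?_)
        · refine (hCb n hn).trans ?_
          rw [htdef]
          nlinarith [le_max_left C 1]
        · have hthis : ‖∑ j ∈ Finset.range (p ^ n),
              ((if 1 ≤ ‖y + (j:K)‖ then φ ((y + (j:K)) + ε) else 0)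
                - (if 1 ≤ ‖y + (j:K)‖ then φ (y + (j:K)) else 0))‖ ≤ t := by
            apply IsUltrametricDist.norm_sum_le_of_forall_le_of_nonneg ht0.le
            intro j _
            by_cases hz : 1 ≤ ‖y + (j:K)‖
            · rw [if_pos hz, if_pos hz]
              exact (hφd (y + (j:K)) ε hz hεp).trans hεn
            · rw [if_neg hz, if_neg hz, sub_self, norm_zero]
              exact ht0.le
          refine hthis.trans ?_
          nlinarith [le_max_right C 1]
      calc (p:ℝ) ^ n * ‖_ + ε * _‖ ≤ (p:ℝ) ^ n * (E * t * t) := by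
            apply mul_le_mul_of_nonneg_left _ (by positivity)
            refine (IsUltrametricDist.norm_add_le_max _ _).trans (max_le bound1 ?_)
            rw [norm_mul]
            calc ‖ε‖ * ‖∑ j ∈ Finset.range (p ^ n),
                (if 1 ≤ ‖y + (j:K)‖ then φ ((y + (j:K)) + ε) else 0)‖
                ≤ t * (max C 1 * t) := mul_le_mul hεn bound2 (norm_nonneg _) ht0.le
              _ ≤ E * t * t := by
                  nlinarith [mul_le_mul_of_nonneg_right hEC1 (mul_pos ht0 ht0).le]
        _ = E * t := by
            calc (p:ℝ) ^ n * (E * t * t) = (E * t) * ((p:ℝ)^n * t) := by ring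
              _ = E * t := by rw [htp, mul_one]
    · have h1 : Tendsto (fun n : ℕ => ((p:ℝ)⁻¹) ^ n) atTop (nhds 0) :=
        tendsto_pow_atTop_nhds_zero_of_lt_one (by positivity)
          (by rw [inv_lt_one₀ (by linarith)]; exact hpR)
      have h2 := h1.const_mul E
      rw [mul_zero] at h2
      refine h2.congr fun n => ?_
      rw [inv_pow]
  -- ========== A lemma: mesh m*p^n averages ==========
  have hA : ∀ (h : K → K) (L : K),
      Tendsto (fun n : ℕ => ((p:K) ^ n)⁻¹ * ∑ j ∈ Finset.range (p ^ n), h (y + (j:K)))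
        atTop (nhds L) →
      (∀ c : ℕ, Tendsto (fun n : ℕ => ((p:K) ^ n)⁻¹ *
          ∑ j ∈ Finset.range (p ^ n), (h (y + ((p ^ n * c + j : ℕ):K)) - h (y + (j:K))))
        atTop (nhds 0)) →
      Tendsto (fun n : ℕ => ((p:K) ^ n)⁻¹ * ∑ k ∈ Finset.range (m * p ^ n), h (y + (k:K)))
        atTop (nhds ((m:K) * L)) := by
    intro h L hS hTc
    have h1 := tendsto_finset_sum (Finset.range m)
      (fun c (_ : c ∈ Finset.range m) => (hS.add (hTc c)))
    have hval : ∑ _c ∈ Finset.range m, (L + 0) = (m:K) * L := by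
      simp [Finset.sum_const, Finset.card_range, nsmul_eq_mul]
    rw [hval] at h1
    refine h1.congr fun n => ?_
    calc ∑ c ∈ Finset.range m, (((p:K) ^ n)⁻¹ * ∑ j ∈ Finset.range (p ^ n), h (y + (j:K))
            + ((p:K) ^ n)⁻¹ * ∑ j ∈ Finset.range (p ^ n),
                (h (y + ((p ^ n * c + j : ℕ):K)) - h (y + (j:K))))
        = ∑ c ∈ Finset.range m, (((p:K) ^ n)⁻¹ *
            ∑ j ∈ Finset.range (p ^ n), h (y + ((p ^ n * c + j : ℕ):K))) :=
          Finset.sum_congr rfl fun c _ => by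
            rw [← mul_add, ← Finset.sum_add_distrib]
            congr 1
            exact Finset.sum_congr rfl fun j _ => by ring
      _ = ((p:K) ^ n)⁻¹ * ∑ c ∈ Finset.range m, ∑ j ∈ Finset.range (p ^ n),
            h (y + ((p ^ n * c + j : ℕ):K)) := (Finset.mul_sum _ _ _).symm
      _ = ((p:K) ^ n)⁻¹ * ∑ k ∈ Finset.range (m * p ^ n), h (y + (k:K)) := by
            rw [aux_sum_range_mul (fun k => h (y + (k:K))) m (p ^ n)]
  -- ========== instantiations ==========
  set F : K → K := fun z => if 1 ≤ ‖z‖ then z * (logp z - 1) else 0 with hF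
  set Rf : K → K := fun z => if 1 ≤ ‖z‖ then z else 0 with hRf
  have hSF : Tendsto (fun n : ℕ => ((p:K) ^ n)⁻¹ * ∑ j ∈ Finset.range (p ^ n), F (y + (j:K)))
      atTop (nhds (LG y)) := by
    refine (hLG y).congr fun n => ?_
    simp only [hF]
  have hSR : Tendsto (fun n : ℕ => ((p:K) ^ n)⁻¹ * ∑ j ∈ Finset.range (p ^ n), Rf (y + (j:K)))
      atTop (nhds (R y)) := by
    refine (hR y).congr fun n => ?_
    simp only [hRf]
  have hFd : ∀ z ε : K, ‖ε‖ * p ≤ 1 →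
      ‖F (z + ε) - F z - ε * (if 1 ≤ ‖z‖ then logp (z + ε) else 0)‖ ≤ (p:ℝ) * ‖ε‖ ^ 2 := by
    intro z ε hε
    simp only [hF]
    exact hfd z ε hε
  have hRd : ∀ z ε : K, ‖ε‖ * p ≤ 1 →
      ‖Rf (z + ε) - Rf z - ε * (if 1 ≤ ‖z‖ then (fun _ : K => (1:K)) (z + ε) else 0)‖
        ≤ (p:ℝ) * ‖ε‖ ^ 2 := by
    intro z ε hε
    simp only [hRf]
    exact hrd z ε hε
  have hone : ∀ z ε : K, 1 ≤ ‖z‖ → ‖ε‖ * p ≤ 1 →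
      ‖(fun _ : K => (1:K)) (z + ε) - (fun _ : K => (1:K)) z‖ ≤ ‖ε‖ := by
    intro z ε _ _
    simp
  have hAF := hA F (LG y) hSF (hT F logp hlogd hFd)
  have hAR := hA Rf (R y) hSR (hT Rf (fun _ : K => (1:K)) hone hRd)
  have hcomb := ((hAF.sub (hAR.const_mul (logp (m:K)))).const_mul ((m:K))⁻¹)
  -- ========== per-n identity ==========
  have htermEq : ∀ i j : ℕ,
      (if 1 ≤ ‖(y + (i:K)) / (m:K) + (j:K)‖ then
        ((y + (i:K)) / (m:K) + (j:K)) * (logp ((y + (i:K)) / (m:K) + (j:K)) - 1) else 0)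
      = (m:K)⁻¹ * (F (y + ((i + m * j : ℕ):K)) - logp (m:K) * Rf (y + ((i + m * j : ℕ):K))) := by
    intro i j
    have hcast : y + ((i + m * j : ℕ) : K) = y + (i:K) + (m:K) * (j:K) := by
      push_cast; ring
    rw [hcast]
    have harg : (y + (i:K)) / (m:K) + (j:K) = (y + (i:K) + (m:K) * (j:K)) / (m:K) := by
      field_simp
    rw [harg]
    have hnormu : ‖(y + (i:K) + (m:K) * (j:K)) / (m:K)‖ = ‖y + (i:K) + (m:K) * (j:K)‖ := by
      rw [norm_div, hmK, div_one]
    rw [hnormu]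
    set u : K := y + (i:K) + (m:K) * (j:K) with hu
    simp only [hF, hRf]
    by_cases hc : 1 ≤ ‖u‖
    · rw [if_pos hc, if_pos hc, if_pos hc]
      have hu0 : u ≠ 0 := by intro hz; rw [hz, norm_zero] at hc; linarith
      rw [hlog_div u hu0]
      field_simp
      ring
    · rw [if_neg hc, if_neg hc, if_neg hc]
      simp
  have heq : ∀ n : ℕ,
      (∑ i ∈ Finset.range m, (((p:K) ^ n)⁻¹ * ∑ j ∈ Finset.range (p ^ n),
          (if 1 ≤ ‖(y + (i:K)) / (m:K) + (j:K)‖ then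
            ((y + (i:K)) / (m:K) + (j:K)) * (logp ((y + (i:K)) / (m:K) + (j:K)) - 1) else 0)))
      = (m:K)⁻¹ * ((((p:K) ^ n)⁻¹ * ∑ k ∈ Finset.range (m * p ^ n), F (y + (k:K)))
          - logp (m:K) * (((p:K) ^ n)⁻¹ * ∑ k ∈ Finset.range (m * p ^ n), Rf (y + (k:K)))) := by
    intro n
    have hre : ∀ g : ℕ → K,
        ∑ i ∈ Finset.range m, ∑ j ∈ Finset.range (p ^ n), g (i + m * j)
          = ∑ k ∈ Finset.range (m * p ^ n), g k := by
      intro g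
      calc ∑ i ∈ Finset.range m, ∑ j ∈ Finset.range (p ^ n), g (i + m * j)
          = ∑ j ∈ Finset.range (p ^ n), ∑ i ∈ Finset.range m, g (i + m * j) :=
            Finset.sum_comm
        _ = ∑ j ∈ Finset.range (p ^ n), ∑ i ∈ Finset.range m, g (m * j + i) :=
            Finset.sum_congr rfl fun j _ => Finset.sum_congr rfl fun i _ => by
              rw [Nat.add_comm]
        _ = ∑ k ∈ Finset.range (p ^ n * m), g k := (aux_sum_range_mul g (p ^ n) m).symm
        _ = ∑ k ∈ Finset.range (m * p ^ n), g k := by rw [mul_comm]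
    have hstep : ∑ i ∈ Finset.range m, (((p:K) ^ n)⁻¹ * ∑ j ∈ Finset.range (p ^ n),
          (if 1 ≤ ‖(y + (i:K)) / (m:K) + (j:K)‖ then
            ((y + (i:K)) / (m:K) + (j:K)) * (logp ((y + (i:K)) / (m:K) + (j:K)) - 1) else 0))
        = ((p:K) ^ n)⁻¹ * ∑ i ∈ Finset.range m, ∑ j ∈ Finset.range (p ^ n),
            ((m:K)⁻¹ * (F (y + ((i + m * j : ℕ):K))
              - logp (m:K) * Rf (y + ((i + m * j : ℕ):K)))) := by
      rw [Finset.mul_sum]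
      refine Finset.sum_congr rfl fun i _ => ?_
      congr 1
      exact Finset.sum_congr rfl fun j _ => htermEq i j
    rw [hstep]
    simp only [← Finset.mul_sum, Finset.sum_sub_distrib]
    rw [hre (fun k => F (y + (k:K))), hre (fun k => Rf (y + (k:K)))]
    ring
  have hLHS := tendsto_finset_sum (Finset.range m)
    (fun i (_ : i ∈ Finset.range m) => hLG ((y + (i:K)) / (m:K)))
  have hfinal := tendsto_nhds_unique hLHS (hcomb.congr fun n => (heq n).symm)
  rw [hfinal]
  field_simp
end

section
/- Let x ∈ O_{C_p} with residue in F_p, and let ℓ(x) be the unique integer with 1 ≤ ℓ(x) ≤ p congruent to x modulo the maximal ideal; set x' = (x + p - ℓ(x))/p ∈ O_{C_p}. Let f : C_p\{0} → C_p be locally analytic with f(py) = f(y) for all y ≠ 0, and F(w) := ∫_{Z_p} (w+t) f(w+t) χ(w+t) dt. Then for r ≥ 1, ∑_{k=0}^{p^r-1} F((x+k)/p^r) = F(x) + ∑_{j=0}^{p^{r-1}-1} F((x'+j)/p^{r-1}). -/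
open Filter

/-- Reindexing a sum over `range (a*b)` as a double sum. -/
lemma sum_range_mul_aux {M : Type*} [AddCommMonoid M] (h : ℕ → M) (a b : ℕ) :
    ∑ m ∈ Finset.range (a * b), h m
      = ∑ k ∈ Finset.range a, ∑ j ∈ Finset.range b, h (k + j * a) := by
  induction b with
  | zero => simp
  | succ b ih =>
      rw [Nat.mul_succ, Finset.sum_range_add, ih]
      simp only [Finset.sum_range_succ, Finset.sum_add_distrib]
      congr 1
      apply Finset.sum_congr rfl
      intro k _
      congr 1
      ring

/-- Let `x ∈ O_{ℂ_p}` with residue in `F_p`, witnessed by the unique `1 ≤ ℓ ≤ p` with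
`‖x - ℓ‖ < 1`, and set `x' = (x + p - ℓ)/p`.  For `f` locally analytic on `ℂ_p \ {0}`
with `f(py) = f(y)` and `F(w) = ∫_{ℤ_p} (w+t) f(w+t) χ(w+t) dt`, one has for `r ≥ 1`:
`∑_{k<p^r} F((x+k)/p^r) = F(x) + ∑_{j<p^{r-1}} F((x'+j)/p^{r-1})`. -/
theorem F_sum_over_pr_of_residue_in_Fp (p : ℕ) [Fact p.Prime] (K : Type*)
    [NontriviallyNormedField K] [CompleteSpace K] [IsAlgClosed K] [IsUltrametricDist K]
    [Algebra ℚ_[p] K] (hiso : ∀ q : ℚ_[p], ‖algebraMap ℚ_[p] K q‖ = ‖q‖)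
    (x : K) (hx : ‖x‖ ≤ 1)
    (ℓ : ℕ) (hℓ1 : 1 ≤ ℓ) (hℓp : ℓ ≤ p) (hres : ‖x - (ℓ : K)‖ < 1)
    (f : K → K) (hfan : ∀ y : K, y ≠ 0 → AnalyticAt K f y)
    (hfp : ∀ y : K, y ≠ 0 → f ((p : K) * y) = f y)
    (F : K → K)
    (hF : ∀ w : K,
      Tendsto (fun n : ℕ => ((p : K) ^ n)⁻¹ * ∑ j ∈ Finset.range (p ^ n),
          ((w + (j : K)) * f (w + (j : K)) * (if 1 ≤ ‖w + (j : K)‖ then (1 : K) else 0)))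
        atTop (nhds (F w)))
    (r : ℕ) (hr : 1 ≤ r) :
    ∑ k ∈ Finset.range (p ^ r), F ((x + (k : K)) / (p : K) ^ r) =
      F x + ∑ j ∈ Finset.range (p ^ (r - 1)),
        F (((x + (p : K) - (ℓ : K)) / (p : K) + (j : K)) / (p : K) ^ (r - 1)) := by
  obtain ⟨r', rfl⟩ : ∃ r', r = r' + 1 := ⟨r - 1, (Nat.succ_pred_eq_of_pos hr).symm⟩
  simp only [Nat.add_sub_cancel]
  set g : K → K := fun u => u * f u * (if 1 ≤ ‖u‖ then (1 : K) else 0) with hg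
  have hF' : ∀ w : K,
      Tendsto (fun n : ℕ => ((p : K) ^ n)⁻¹ * ∑ j ∈ Finset.range (p ^ n), g (w + (j : K)))
        atTop (nhds (F w)) := hF
  have hppos : 0 < p := (Fact.out : p.Prime).pos
  have hnormp : ‖(p : K)‖ = ((p : ℝ))⁻¹ := by
    rw [← map_natCast (algebraMap ℚ_[p] K) p, hiso]
    exact Padic.norm_p
  have hp0 : (p : K) ≠ 0 := by
    intro h
    rw [h, norm_zero] at hnormp
    have h2 : (0:ℝ) < ((p:ℝ))⁻¹ := by positivity
    rw [← hnormp] at h2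
    exact lt_irrefl 0 h2
  have hnormnat : ∀ m : ℕ, ‖(m : K)‖ = ‖(m : ℚ_[p])‖ := fun m => by
    rw [← map_natCast (algebraMap ℚ_[p] K) m, hiso]
  -- norm of x + m depending on divisibility of m + ℓ by p
  have hnorm_xm : ∀ m : ℕ, ¬ (p ∣ (m + ℓ)) → ‖x + (m : K)‖ = 1 := by
    intro m hdvd
    have h1 : ‖((m : K) + (ℓ : K))‖ = 1 := by
      have hc : ((m + ℓ : ℕ) : K) = (m : K) + (ℓ : K) := by push_cast; ring
      rw [← hc, hnormnat]
      have hle : ‖((m + ℓ : ℕ) : ℚ_[p])‖ ≤ 1 := by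
        exact_mod_cast Padic.norm_int_le_one ((m + ℓ : ℕ) : ℤ)
      have hlt : ¬ ‖((m + ℓ : ℕ) : ℚ_[p])‖ < 1 := by
        intro h
        have h2 := (Padic.norm_intCast_lt_one_iff (k := ((m + ℓ : ℕ) : ℤ))).mp (by exact_mod_cast h)
        exact hdvd (by exact_mod_cast h2)
      rcases lt_or_eq_of_le hle with h | h
      · exact absurd h hlt
      · exact h
    have h2 : x + (m : K) = (x - (ℓ : K)) + ((m : K) + (ℓ : K)) := by ring
    rw [h2, IsUltrametricDist.norm_add_eq_max_of_norm_ne_norm (by rw [h1]; exact ne_of_lt hres),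
      h1]
    exact max_eq_right (le_of_lt (h1 ▸ hres))
  have hnorm_xm' : ∀ m : ℕ, (p ∣ (m + ℓ)) → ‖x + (m : K)‖ < 1 := by
    intro m hdvd
    have h1 : ‖((m : K) + (ℓ : K))‖ < 1 := by
      have hc : ((m + ℓ : ℕ) : K) = (m : K) + (ℓ : K) := by push_cast; ring
      rw [← hc, hnormnat]
      exact_mod_cast (Padic.norm_intCast_lt_one_iff (k := ((m + ℓ : ℕ) : ℤ))).mpr
        (by exact_mod_cast hdvd)
    have h2 : x + (m : K) = (x - (ℓ : K)) + ((m : K) + (ℓ : K)) := by ring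
    rw [h2]
    exact lt_of_le_of_lt (IsUltrametricDist.norm_add_le_max _ _) (max_lt hres h1)
  -- f is invariant under multiplication by powers of p
  have hfpow : ∀ (s : ℕ) (y : K), y ≠ 0 → f ((p : K) ^ s * y) = f y := by
    intro s
    induction s with
    | zero => intro y _; simp
    | succ s ih =>
        intro y hy
        have h2 : (p : K) ^ (s + 1) * y = (p : K) * ((p : K) ^ s * y) := by ring
        rw [h2, hfp _ (mul_ne_zero (pow_ne_zero _ hp0) hy), ih y hy]
  -- g vanishes at x + m when p ∣ m + ℓ
  have hdz : ∀ m : ℕ, (p ∣ (m + ℓ)) → g (x + (m : K)) = 0 := by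
    intro m hdvd
    have h1 := hnorm_xm' m hdvd
    simp only [hg, if_neg (by linarith : ¬ (1:ℝ) ≤ ‖x + (m : K)‖), mul_zero]
  -- rescaling identity when p ∤ m + ℓ
  have hnd : ∀ m : ℕ, ¬ (p ∣ (m + ℓ)) →
      g ((x + (m : K)) / (p : K) ^ (r' + 1)) = ((p : K) ^ (r' + 1))⁻¹ * g (x + (m : K)) := by
    intro m hdvd
    have hn1 : ‖x + (m : K)‖ = 1 := hnorm_xm m hdvd
    have hne : x + (m : K) ≠ 0 := by
      intro h; rw [h, norm_zero] at hn1; norm_num at hn1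
    have hfval : f ((x + (m : K)) / (p : K) ^ (r' + 1)) = f (x + (m : K)) := by
      have h2 : (p : K) ^ (r' + 1) * ((x + (m : K)) / (p : K) ^ (r' + 1)) = x + (m : K) := by
        field_simp
      conv_rhs => rw [← h2]
      rw [hfpow _ _ (by
        simp only [ne_eq, div_eq_zero_iff, not_or]
        exact ⟨hne, pow_ne_zero _ hp0⟩)]
    have hchi : (1 : ℝ) ≤ ‖(x + (m : K)) / (p : K) ^ (r' + 1)‖ := by
      rw [norm_div, hn1, norm_pow, hnormp, one_div, inv_pow, inv_inv]
      have h1p : (1 : ℝ) ≤ (p : ℝ) := by exact_mod_cast hppos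
      exact one_le_pow₀ h1p
    simp only [hg, hfval, if_pos hchi, if_pos (le_of_eq hn1.symm)]
    field_simp
  -- Step A: the sum of F over scaled translates as a Volkenborn-type limit
  have stepA : ∀ (w : K) (s : ℕ),
      Tendsto (fun n : ℕ => ((p : K) ^ n)⁻¹ *
          ∑ m ∈ Finset.range (p ^ (n + s)), g ((w + (m : K)) / (p : K) ^ s))
        atTop (nhds (∑ k ∈ Finset.range (p ^ s), F ((w + (k : K)) / (p : K) ^ s))) := by
    intro w s
    have h1 := tendsto_finset_sum (Finset.range (p ^ s))
      (fun k (_ : k ∈ Finset.range (p ^ s)) => hF' ((w + (k : K)) / (p : K) ^ s))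
    refine h1.congr (fun n => ?_)
    rw [show p ^ (n + s) = p ^ s * p ^ n by rw [pow_add, mul_comm]]
    rw [sum_range_mul_aux (fun m => g ((w + (m : K)) / (p : K) ^ s)) (p ^ s) (p ^ n),
      Finset.mul_sum]
    apply Finset.sum_congr rfl
    intro k _
    rw [Finset.mul_sum, Finset.mul_sum]
    apply Finset.sum_congr rfl
    intro j _
    congr 2
    push_cast
    field_simp
    ring
  -- termwise identity for the splitting
  have stepB : ∀ n : ℕ,
      ((p : K) ^ n)⁻¹ *
          ∑ m ∈ Finset.range (p ^ (n + (r' + 1))), g ((x + (m : K)) / (p : K) ^ (r' + 1))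
        = ((p : K) ^ (n + (r' + 1)))⁻¹ *
              ∑ m ∈ Finset.range (p ^ (n + (r' + 1))), g (x + (m : K))
          + ((p : K) ^ n)⁻¹ * ∑ m ∈ Finset.range (p ^ (n + r')),
              g (((x + (p : K) - (ℓ : K)) / (p : K) + (m : K)) / (p : K) ^ r') := by
    intro n
    have hNN : p ^ (n + (r' + 1)) = p * p ^ (n + r') := by
      rw [show n + (r' + 1) = (n + r') + 1 by ring, pow_succ, mul_comm]
    set N := p ^ (n + r') with hNdef
    have hterm : ∀ i ∈ Finset.range p, ∀ q ∈ Finset.range N,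
        g ((x + ((i + q * p : ℕ) : K)) / (p : K) ^ (r' + 1))
          = ((p : K) ^ (r' + 1))⁻¹ * g (x + ((i + q * p : ℕ) : K))
            + (if i = p - ℓ then
                g (((x + (p : K) - (ℓ : K)) / (p : K) + (q : K)) / (p : K) ^ r') else 0) := by
      intro i hi q _
      have hilt : i < p := Finset.mem_range.mp hi
      by_cases hcase : i = p - ℓ
      · subst hcase
        have hsum : (p - ℓ) + q * p + ℓ = p * (1 + q) := by
          rw [add_right_comm, Nat.sub_add_cancel hℓp]; ring
        have hz : g (x + (((p - ℓ) + q * p : ℕ) : K)) = 0 := hdz _ ⟨1 + q, hsum⟩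
        rw [hz, mul_zero, zero_add, if_pos rfl]
        congr 1
        have hc : (((p - ℓ) + q * p : ℕ) : K) = (p : K) - (ℓ : K) + (q : K) * (p : K) := by
          push_cast [Nat.cast_sub hℓp]; ring
        rw [hc, pow_succ]
        field_simp
        ring
      · have hnd' : ¬ p ∣ ((i + q * p) + ℓ) := by
          intro hd
          have h2 : p ∣ q * p := dvd_mul_left p q
          have h3 : (i + q * p) + ℓ = (i + ℓ) + q * p := by ring
          rw [h3] at hd
          have h4 : p ∣ i + ℓ := (Nat.dvd_add_iff_left h2).mpr hd
          obtain ⟨t, htt⟩ := h4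
          have ht1 : 1 ≤ t := by
            rcases Nat.eq_zero_or_pos t with h | h
            · rw [h, Nat.mul_zero] at htt; omega
            · exact h
          have ht2 : t < 2 := by
            by_contra hcon
            push_neg at hcon
            have h5 : p * 2 ≤ p * t := Nat.mul_le_mul_left p hcon
            rw [← htt] at h5
            omega
          have ht3 : t = 1 := by omega
          rw [ht3, Nat.mul_one] at htt
          exact hcase (by omega)
        rw [hnd _ hnd', if_neg hcase, add_zero]
    have e1 : ∑ m ∈ Finset.range (p ^ (n + (r' + 1))), g ((x + (m : K)) / (p : K) ^ (r' + 1))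
        = ((p : K) ^ (r' + 1))⁻¹ *
              (∑ m ∈ Finset.range (p ^ (n + (r' + 1))), g (x + (m : K)))
          + ∑ q ∈ Finset.range N,
              g (((x + (p : K) - (ℓ : K)) / (p : K) + (q : K)) / (p : K) ^ r') := by
      rw [hNN]
      rw [sum_range_mul_aux (fun m => g ((x + (m : K)) / (p : K) ^ (r' + 1))) p N]
      rw [sum_range_mul_aux (fun m => g (x + (m : K))) p N]
      rw [Finset.sum_congr rfl (fun i hi => Finset.sum_congr rfl (fun q hq => hterm i hi q hq))]
      simp only [Finset.sum_add_distrib, Finset.mul_sum]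
      congr 1
      have h6 : ∀ i ∈ Finset.range p,
            (∑ q ∈ Finset.range N, (if i = p - ℓ then
              g (((x + (p : K) - (ℓ : K)) / (p : K) + (q : K)) / (p : K) ^ r') else 0))
            = (if i = p - ℓ then
                ∑ q ∈ Finset.range N,
                  g (((x + (p : K) - (ℓ : K)) / (p : K) + (q : K)) / (p : K) ^ r') else 0) := by
        intro i _
        by_cases h : i = p - ℓ
        · simp [h]
        · simp [h]
      rw [Finset.sum_congr rfl h6, Finset.sum_ite_eq' (Finset.range p) (p - ℓ)]
      rw [if_pos (Finset.mem_range.mpr (by omega))]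
    rw [e1, mul_add]
    congr 1
    rw [pow_add, mul_inv]
    ring
  -- conclude by uniqueness of limits
  have hA := stepA x (r' + 1)
  have hx' := stepA ((x + (p : K) - (ℓ : K)) / (p : K)) r'
  have hFx : Tendsto (fun n : ℕ => ((p : K) ^ (n + (r' + 1)))⁻¹ *
      ∑ m ∈ Finset.range (p ^ (n + (r' + 1))), g (x + (m : K))) atTop (nhds (F x)) :=
    (hF' x).comp (tendsto_add_atTop_nat (r' + 1))
  have hsum := hFx.add hx'
  exact tendsto_nhds_unique hA (hsum.congr (fun n => (stepB n).symm))
end
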